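/- Pairwise decomposition of tensor network contraction: if 𝒯 = 𝒯₁ ⊔ 𝒯₂ is a partition of the input tensors with variable sets Λ₁ and Λ₂ respectively, and every variable in (Λ₁ ∩ Λ₂) ∪ V₀ is included in the intermediate output sets, then con(Λ, 𝒯, V₀) = con(Λ₁' ∪ Λ₂', {con(Λ₁, 𝒯₁, Λ₁'), con(Λ₂, 𝒯₂, Λ₂')}, V₀), where Λᵢ' = Λᵢ ∩ (Λ_{3−i} ∪ V₀). -/

import Mathlib

/-!
STATEMENT 9: Pairwise decomposition of a tensor network contraction: if 𝒯 = 𝒯₁ ⊔ 𝒯₂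
with variable sets Λ₁, Λ₂, and Λᵢ' = Λᵢ ∩ (Λ_{3−i} ∪ V₀), then
con(Λ, 𝒯, V₀) = con(Λ₁' ∪ Λ₂', {con(Λ₁, 𝒯₁, Λ₁'), con(Λ₂, 𝒯₂, Λ₂')}, V₀).
-/

variable {ι : Type} [Fintype ι] [DecidableEq ι]
variable {D : ι → Type} [∀ i, Fintype (D i)] [∀ i, DecidableEq (D i)]

/-- Tensor network contraction `con(Λ, 𝒯, V₀)` over the variable set `Λ`: sums the
product of the tensors over all assignments of `Λ ∖ V₀`, the remaining coordinates
being fixed by `x`. -/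
noncomputable def con (Λ : Finset ι) (𝒯 : List ((∀ i, D i) → ℝ)) (V₀ : Finset ι)
    (x : ∀ i, D i) : ℝ :=
  ∑ y : ∀ i, D i,
    if ∀ i, i ∉ Λ \ V₀ → y i = x i then (𝒯.map fun T => T y).prod else 0

/-- A tensor `T` has scope (at most) `S` if it depends only on the coordinates in `S`. -/
def TensorDependsOn (T : (∀ i, D i) → ℝ) (S : Finset ι) : Prop :=
  ∀ x y : ∀ i, D i, (∀ i ∈ S, x i = y i) → T x = T y

/-- Pairwise decomposition: contracting the two sub-networks first, keeping the shared
and output variables open (Λᵢ' = Λᵢ ∩ (Λ_{3−i} ∪ V₀)), and then contracting the two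
resulting tensors, gives the same result as contracting the whole network at once. -/
noncomputable def csum (S : Finset ι) (F : (∀ i, D i) → ℝ) (x : ∀ i, D i) : ℝ :=
  ∑ y : ∀ i, D i, if ∀ i, i ∉ S → y i = x i then F y else 0

lemma csum_union (S T : Finset ι) (hST : Disjoint S T) (F : (∀ i, D i) → ℝ)
    (x : ∀ i, D i) :
    csum (S ∪ T) F x = csum S (fun z => csum T F z) x := by
  unfold csum
  have step : ∀ z : ∀ i, D i,
      (if ∀ i, i ∉ S → z i = x i then (∑ y : ∀ i, D i, if ∀ i, i ∉ T → y i = z i then F y else 0) else 0)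
        = ∑ y : ∀ i, D i,
            if (∀ i, i ∉ S → z i = x i) ∧ (∀ i, i ∉ T → y i = z i) then F y else 0 := by
    intro z
    split_ifs with hz
    · refine Finset.sum_congr rfl fun y _ => ?_
      by_cases hy2 : ∀ i, i ∉ T → y i = z i
      · rw [if_pos hy2, if_pos ⟨hz, hy2⟩]
      · rw [if_neg hy2, if_neg fun h => hy2 h.2]
    · symm
      refine Finset.sum_eq_zero fun y _ => ?_
      simp [hz]
  rw [Finset.sum_congr rfl fun z _ => step z, Finset.sum_comm]
  refine Finset.sum_congr rfl fun y _ => ?_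
  by_cases hy : ∀ i, i ∉ S ∪ T → y i = x i
  · rw [if_pos hy]
    set z₀ : ∀ i, D i := fun i => if i ∈ T then x i else y i with hz₀
    rw [Finset.sum_eq_single z₀]
    · rw [if_pos]
      constructor
      · intro i hiS
        by_cases hiT : i ∈ T
        · simp [hz₀, hiT]
        · simp only [hz₀, if_neg hiT]
          exact hy i (by simp [hiS, hiT])
      · intro i hiT
        simp [hz₀, hiT]
    · intro z _ hz
      rw [if_neg]
      rintro ⟨hc1, hc2⟩
      apply hz
      funext i
      by_cases hiT : i ∈ T
      · have hiS : i ∉ S := fun h => (Finset.disjoint_left.mp hST h) hiT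
        simp [hz₀, hiT, hc1 i hiS]
      · simp [hz₀, hiT, (hc2 i hiT).symm]
    · intro h; exact absurd (Finset.mem_univ z₀) h
  · rw [if_neg hy]
    symm
    refine Finset.sum_eq_zero fun z _ => ?_
    rw [if_neg]
    rintro ⟨hc1, hc2⟩
    exact hy fun i hi => by
      have hiS : i ∉ S := fun h => hi (Finset.mem_union_left _ h)
      have hiT : i ∉ T := fun h => hi (Finset.mem_union_right _ h)
      rw [hc2 i hiT, hc1 i hiS]

lemma csum_mul_right (S A : Finset ι) (h : Disjoint S A) (F G : (∀ i, D i) → ℝ)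
    (hG : TensorDependsOn G A) (x : ∀ i, D i) :
    csum S (fun y => F y * G y) x = csum S F x * G x := by
  unfold csum
  rw [Finset.sum_mul]
  refine Finset.sum_congr rfl fun y _ => ?_
  split_ifs with h'
  · simp only [hG y x fun i hi => h' i (Finset.disjoint_right.mp h hi)]
  · simp

lemma csum_mul_left (S A : Finset ι) (h : Disjoint S A) (F G : (∀ i, D i) → ℝ)
    (hG : TensorDependsOn G A) (x : ∀ i, D i) :
    csum S (fun y => G y * F y) x = G x * csum S F x := by
  unfold csum
  rw [Finset.mul_sum]
  refine Finset.sum_congr rfl fun y _ => ?_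
  split_ifs with h'
  · simp only [hG y x fun i hi => h' i (Finset.disjoint_right.mp h hi)]
  · simp

lemma dependsOn_csum (S A : Finset ι) (F : (∀ i, D i) → ℝ) (hF : TensorDependsOn F A) :
    TensorDependsOn (fun x => csum S F x) (A \ S) := by
  intro x y hxy
  unfold csum
  refine Fintype.sum_bijective
    (fun w i => if i ∈ S then w i else Equiv.swap (x i) (y i) (w i)) ?_ _ _ fun w => ?_
  · apply Function.Involutive.bijective
    intro w
    funext i
    by_cases hi : i ∈ S <;> simp [hi]
  · have hiff : (∀ i, i ∉ S → w i = x i) ↔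
        (∀ i, i ∉ S → (if i ∈ S then w i else Equiv.swap (x i) (y i) (w i)) = y i) := by
      constructor
      · intro hw i hi
        simp [hi, hw i hi]
      · intro hw i hi
        have := hw i hi
        simp only [if_neg hi] at this
        have := congrArg (Equiv.swap (x i) (y i)) this
        simpa using this
    by_cases hw : ∀ i, i ∉ S → w i = x i
    · rw [if_pos hw, if_pos (hiff.mp hw)]
      refine hF _ _ fun i hi => ?_
      by_cases hiS : i ∈ S
      · simp [hiS]
      · have : i ∈ A \ S := Finset.mem_sdiff.mpr ⟨hi, hiS⟩
        simp [hiS, hw i hiS, hxy i this]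
    · rw [if_neg hw, if_neg (fun h => hw (hiff.mpr h))]


theorem con_pairwise_decomposition (Λ₁ Λ₂ V₀ : Finset ι)
    (𝒯₁ 𝒯₂ : List ((∀ i, D i) → ℝ))
    (h₁ : ∀ T ∈ 𝒯₁, TensorDependsOn T Λ₁) (h₂ : ∀ T ∈ 𝒯₂, TensorDependsOn T Λ₂)
    (hV₀ : V₀ ⊆ Λ₁ ∪ Λ₂) (x : ∀ i, D i) :
    con (Λ₁ ∪ Λ₂) (𝒯₁ ++ 𝒯₂) V₀ x =
      con ((Λ₁ ∩ (Λ₂ ∪ V₀)) ∪ (Λ₂ ∩ (Λ₁ ∪ V₀)))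
        [con Λ₁ 𝒯₁ (Λ₁ ∩ (Λ₂ ∪ V₀)), con Λ₂ 𝒯₂ (Λ₂ ∩ (Λ₁ ∪ V₀))] V₀ x := by
  classical
  set S₀ := (Λ₁ ∩ Λ₂) \ V₀ with hS₀
  set S₁ := Λ₁ \ (Λ₂ ∪ V₀) with hS₁
  set S₂ := Λ₂ \ (Λ₁ ∪ V₀) with hS₂
  set P₁ : (∀ i, D i) → ℝ := fun y => (𝒯₁.map fun T => T y).prod with hP₁def
  set P₂ : (∀ i, D i) → ℝ := fun y => (𝒯₂.map fun T => T y).prod with hP₂def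
  have hP₁ : TensorDependsOn P₁ Λ₁ := by
    intro a b hab
    simp only [hP₁def]
    congr 1
    exact List.map_congr_left fun T hT => h₁ T hT a b hab
  have hP₂ : TensorDependsOn P₂ Λ₂ := by
    intro a b hab
    simp only [hP₂def]
    congr 1
    exact List.map_congr_left fun T hT => h₂ T hT a b hab
  have hU : (Λ₁ ∪ Λ₂) \ V₀ = S₀ ∪ (S₁ ∪ S₂) := by
    ext i; simp only [hS₀, hS₁, hS₂, Finset.mem_sdiff, Finset.mem_union,
      Finset.mem_inter]; tauto
  have hΛ' : ((Λ₁ ∩ (Λ₂ ∪ V₀)) ∪ (Λ₂ ∩ (Λ₁ ∪ V₀))) \ V₀ = S₀ := by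
    ext i; simp only [hS₀, Finset.mem_sdiff, Finset.mem_union,
      Finset.mem_inter]; tauto
  have h1 : Λ₁ \ (Λ₁ ∩ (Λ₂ ∪ V₀)) = S₁ := by
    ext i; simp only [hS₁, Finset.mem_sdiff, Finset.mem_union,
      Finset.mem_inter]; tauto
  have h2 : Λ₂ \ (Λ₂ ∩ (Λ₁ ∪ V₀)) = S₂ := by
    ext i; simp only [hS₂, Finset.mem_sdiff, Finset.mem_union,
      Finset.mem_inter]; tauto
  have d0 : Disjoint S₀ (S₁ ∪ S₂) := by
    rw [Finset.disjoint_left]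
    intro i hi hj
    simp only [hS₀, hS₁, hS₂, Finset.mem_sdiff, Finset.mem_union,
      Finset.mem_inter] at hi hj
    tauto
  have d12 : Disjoint S₁ S₂ := by
    rw [Finset.disjoint_left]
    intro i hi hj
    simp only [hS₁, hS₂, Finset.mem_sdiff, Finset.mem_union] at hi hj
    tauto
  have dA : Disjoint S₂ Λ₁ := by
    rw [Finset.disjoint_left]
    intro i hi hj
    simp only [hS₂, Finset.mem_sdiff, Finset.mem_union] at hi
    tauto
  have dB : Disjoint S₁ (Λ₂ \ S₂) := by
    rw [Finset.disjoint_left]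
    intro i hi hj
    simp only [hS₁, Finset.mem_sdiff, Finset.mem_union] at hi
    simp only [Finset.mem_sdiff] at hj
    tauto
  have key : ∀ (A : Finset ι) (L : List ((∀ i, D i) → ℝ)) (V : Finset ι) (w : ∀ i, D i),
      con A L V w = csum (A \ V) (fun z => (L.map fun T => T z).prod) w :=
    fun _ _ _ _ => rfl
  have conL : con (Λ₁ ∪ Λ₂) (𝒯₁ ++ 𝒯₂) V₀ x
      = csum ((Λ₁ ∪ Λ₂) \ V₀) (fun y => P₁ y * P₂ y) x := by
    rw [key]
    simp only [List.map_append, List.prod_append, hP₁def, hP₂def]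
  have hf : con Λ₁ 𝒯₁ (Λ₁ ∩ (Λ₂ ∪ V₀)) = csum S₁ P₁ := by
    funext z
    unfold con csum
    rw [h1]
  have hg : con Λ₂ 𝒯₂ (Λ₂ ∩ (Λ₁ ∪ V₀)) = csum S₂ P₂ := by
    funext z
    unfold con csum
    rw [h2]
  have conR : con ((Λ₁ ∩ (Λ₂ ∪ V₀)) ∪ (Λ₂ ∩ (Λ₁ ∪ V₀)))
        [con Λ₁ 𝒯₁ (Λ₁ ∩ (Λ₂ ∪ V₀)), con Λ₂ 𝒯₂ (Λ₂ ∩ (Λ₁ ∪ V₀))] V₀ x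
      = csum S₀ (fun z => csum S₁ P₁ z * csum S₂ P₂ z) x := by
    rw [hf, hg, key, hΛ']
    simp only [List.map_cons, List.map_nil, List.prod_cons, List.prod_nil, mul_one]
  rw [conL, conR, hU, csum_union _ _ d0]
  have inner : ∀ z, csum (S₁ ∪ S₂) (fun y => P₁ y * P₂ y) z
      = csum S₁ P₁ z * csum S₂ P₂ z := by
    intro z
    rw [csum_union _ _ d12]
    have e2 : (fun w => csum S₂ (fun y => P₁ y * P₂ y) w)
        = fun w => P₁ w * csum S₂ P₂ w :=
      funext fun w => csum_mul_left S₂ Λ₁ dA P₂ P₁ hP₁ w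
    rw [e2]
    exact csum_mul_right S₁ (Λ₂ \ S₂) dB P₁ (csum S₂ P₂)
      (dependsOn_csum S₂ Λ₂ P₂ hP₂) z
  rw [funext inner]
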